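/- Let J be a real 2×2 matrix with tr(J) < 0, det(J) > 0, D = diag(1,d) with 0 < d < 1, B_λ = D⁻¹(J - λI), and suppose tr(B_λ)² - 4 det(B_λ) > 0 and tr(B_λ) > 0 for a real λ > 0. Define μ±_λ = (tr(B_λ) ± sqrt(tr(B_λ)² - 4 det(B_λ)))/2. Then the derivatives with respect to λ satisfy ∂_λ μ⁻_λ > 0 and ∂_λ μ⁺_λ < 0. -/

import Mathlib

open Matrix

/-- The diffusion matrix D = diag(1, d). -/
noncomputable def Dmat (d : ℝ) : Matrix (Fin 2) (Fin 2) ℝ := !![1, 0; 0, d]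

/-- B_λ = D⁻¹ (J - λ I). -/
noncomputable def Bmat (J : Matrix (Fin 2) (Fin 2) ℝ) (d lam : ℝ) :
    Matrix (Fin 2) (Fin 2) ℝ := (Dmat d)⁻¹ * (J - lam • 1)

/-- The larger eigenvalue μ⁺_λ of B_λ. -/
noncomputable def muP (J : Matrix (Fin 2) (Fin 2) ℝ) (d : ℝ) (lam : ℝ) : ℝ :=
  ((Bmat J d lam).trace +
    Real.sqrt ((Bmat J d lam).trace ^ 2 - 4 * (Bmat J d lam).det)) / 2

/-- The smaller eigenvalue μ⁻_λ of B_λ. -/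
noncomputable def muM (J : Matrix (Fin 2) (Fin 2) ℝ) (d : ℝ) (lam : ℝ) : ℝ :=
  ((Bmat J d lam).trace -
    Real.sqrt ((Bmat J d lam).trace ^ 2 - 4 * (Bmat J d lam).det)) / 2

lemma Dinv {d : ℝ} (hd : d ≠ 0) : (Dmat d)⁻¹ = !![1, 0; 0, d⁻¹] := by
  apply Matrix.inv_eq_left_inv
  ext i j
  fin_cases i <;> fin_cases j <;>
    simp [Dmat, Matrix.mul_apply, Fin.sum_univ_two, inv_mul_cancel₀ hd]

lemma Bmat_eq (J : Matrix (Fin 2) (Fin 2) ℝ) {d : ℝ} (lam : ℝ) (hd : d ≠ 0) :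
    Bmat J d lam =
      !![J 0 0 - lam, J 0 1; d⁻¹ * J 1 0, d⁻¹ * (J 1 1 - lam)] := by
  rw [Bmat, Dinv hd]
  ext i j
  fin_cases i <;> fin_cases j <;>
    simp [Matrix.mul_apply, Fin.sum_univ_two, Matrix.one_apply]

lemma traceB (J : Matrix (Fin 2) (Fin 2) ℝ) {d : ℝ} (lam : ℝ) (hd : d ≠ 0) :
    (Bmat J d lam).trace = (J 0 0 - lam) + d⁻¹ * (J 1 1 - lam) := by
  rw [Bmat_eq J lam hd, Matrix.trace_fin_two]
  simp

lemma detB (J : Matrix (Fin 2) (Fin 2) ℝ) {d : ℝ} (lam : ℝ) (hd : d ≠ 0) :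
    (Bmat J d lam).det = d⁻¹ * ((J 0 0 - lam) * (J 1 1 - lam) - J 0 1 * J 1 0) := by
  rw [Bmat_eq J lam hd, Matrix.det_fin_two]
  simp; ring

theorem stmt6 (J : Matrix (Fin 2) (Fin 2) ℝ) (d lam : ℝ)
    (hd : 0 < d) (hd1 : d < 1)
    (htr : J.trace < 0) (hdet : 0 < J.det) (hlam : 0 < lam)
    (hB : 0 < (Bmat J d lam).trace)
    (hP : 0 < (Bmat J d lam).trace ^ 2 - 4 * (Bmat J d lam).det) :
    0 < deriv (muM J d) lam ∧ deriv (muP J d) lam < 0 := by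
  have hd0 : d ≠ 0 := ne_of_gt hd
  set a := J 0 0 with ha
  set b := J 1 1 with hb
  set c := J 0 1 with hc
  set e := J 1 0 with he
  -- explicit functions
  set T : ℝ → ℝ := fun x => (a - x) + d⁻¹ * (b - x) with hT
  set δ : ℝ → ℝ := fun x => d⁻¹ * ((a - x) * (b - x) - c * e) with hδ
  set Q : ℝ → ℝ := fun x => T x ^ 2 - 4 * δ x with hQ
  have hTeq : ∀ x, (Bmat J d x).trace = T x := fun x => traceB J x hd0
  have hdeq : ∀ x, (Bmat J d x).det = δ x := fun x => detB J x hd0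
  have hmuM : muM J d = fun x => (T x - Real.sqrt (Q x)) / 2 := by
    funext x; rw [muM, hTeq, hdeq]
  have hmuP : muP J d = fun x => (T x + Real.sqrt (Q x)) / 2 := by
    funext x; rw [muP, hTeq, hdeq]
  have hQpos : 0 < Q lam := by rw [hQ]; rw [hTeq, hdeq] at hP; exact hP
  have hTpos : 0 < T lam := by rw [hTeq] at hB; exact hB
  have htrJ : a + b < 0 := by rwa [Matrix.trace_fin_two] at htr
  have hdetJ : 0 < a * b - c * e := by rwa [Matrix.det_fin_two] at hdet
  have hdinv : 0 < d⁻¹ := inv_pos.mpr hd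
  have hδpos : 0 < δ lam := by
    rw [hδ]
    have : 0 < (a - lam) * (b - lam) - c * e := by nlinarith
    positivity
  -- derivatives
  have hT' : HasDerivAt T (-(1 + d⁻¹)) lam := by
    have h1 : HasDerivAt (fun x : ℝ => a - x) (-1) lam := by
      simpa using (hasDerivAt_id lam).const_sub a
    have h2 : HasDerivAt (fun x : ℝ => b - x) (-1) lam := by
      simpa using (hasDerivAt_id lam).const_sub b
    have := h1.add (h2.const_mul d⁻¹)
    exact this.congr_deriv (by ring)
  have hδ' : HasDerivAt δ (d⁻¹ * (-(b - lam) - (a - lam))) lam := by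
    have h1 : HasDerivAt (fun x : ℝ => a - x) (-1) lam := by
      simpa using (hasDerivAt_id lam).const_sub a
    have h2 : HasDerivAt (fun x : ℝ => b - x) (-1) lam := by
      simpa using (hasDerivAt_id lam).const_sub b
    have := ((h1.mul h2).sub_const (c * e)).const_mul d⁻¹
    exact this.congr_deriv (by ring)
  set Q' : ℝ := 2 * T lam * (-(1 + d⁻¹)) - 4 * (d⁻¹ * (-(b - lam) - (a - lam))) with hQ'def
  have hQ' : HasDerivAt Q Q' lam := by
    have h1 : HasDerivAt (fun x => T x ^ 2) (2 * T lam * (-(1 + d⁻¹))) lam := by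
      have := hT'.pow 2
      exact this.congr_deriv (by push_cast; ring)
    have := h1.sub (hδ'.const_mul 4)
    exact this
  set s : ℝ := Real.sqrt (Q lam) with hs
  have hspos : 0 < s := Real.sqrt_pos.mpr hQpos
  have hs2 : s ^ 2 = Q lam := Real.sq_sqrt hQpos.le
  have hsqrt' : HasDerivAt (fun x => Real.sqrt (Q x)) (Q' / (2 * s)) lam := by
    have h := (Real.hasDerivAt_sqrt (ne_of_gt hQpos)).comp lam hQ'
    have heq : Q' / (2 * s) = 1 / (2 * Real.sqrt (Q lam)) * Q' := by
      rw [← hs]; ring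
    rw [heq]; exact h
  have hM' : HasDerivAt (muM J d) ((-(1 + d⁻¹) - Q' / (2 * s)) / 2) lam := by
    rw [hmuM]; exact (hT'.sub hsqrt').div_const 2
  have hP' : HasDerivAt (muP J d) ((-(1 + d⁻¹) + Q' / (2 * s)) / 2) lam := by
    rw [hmuP]; exact (hT'.add hsqrt').div_const 2
  have hsT : s < T lam := by
    have hQval : Q lam = T lam ^ 2 - 4 * δ lam := rfl
    nlinarith [hs2, hQval, hδpos, hspos, hTpos]
  have hδ'pos : 0 < d⁻¹ * (-(b - lam) - (a - lam)) := by
    have : 0 < -(b - lam) - (a - lam) := by linarith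
    positivity
  constructor
  · rw [hM'.deriv]
    have hnum : 0 < -(1 + d⁻¹) - Q' / (2 * s) := by
      rw [sub_pos, div_lt_iff₀ (by positivity)]
      rw [hQ'def]
      nlinarith [mul_pos hdinv (show (0:ℝ) < 1 from one_pos)]
    linarith
  · rw [hP'.deriv]
    have hnum : -(1 + d⁻¹) + Q' / (2 * s) < 0 := by
      have h1 : Q' / (2 * s) < 1 + d⁻¹ := by
        rw [div_lt_iff₀ (by positivity), hQ'def]
        nlinarith
      linarith
    linarith
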